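/- arXiv:1710.05731 — 2 statements merged into one kernel-verified Lean document; each statement's English description precedes it below -/
import Mathlib

section
/- Let H' be a connected r-uniform hypergraph of order m − r + 1 ≥ r, and let H be obtained from H' by adding a free hyperedge (so H has order m). Then R(H, K_n^{(r)}; r) ≤ max{ R(H', K_n^{(r)}; r) + n − 1, R(H, K_{n−1}^{(r)}; r) }. -/
/-- Reachability in a hypergraph. -/
def hReach {V : Type*} (E : Set (Finset V)) : V → V → Prop :=
  Relation.ReflTransGen (fun a b => ∃ e ∈ E, a ∈ e ∧ b ∈ e)

/-- `hRamseyOn r S E n` is the Ramsey number `R(H, K_n^{(r)}; r)` where `H` is the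
hypergraph with vertex set `S ⊆ V` and hyperedge set `E`. -/
noncomputable def hRamseyOn {V : Type*} [DecidableEq V] (r : ℕ) (S : Finset V)
    (E : Set (Finset V)) (n : ℕ) : ℕ :=
  sInf {p | ∀ c : Finset (Fin p) → Bool,
    (∃ f : V → Fin p, Set.InjOn f ↑S ∧ ∀ e ∈ E, c (e.image f) = true) ∨
    (∃ g : Fin n → Fin p, Function.Injective g ∧
      ∀ e : Finset (Fin n), e.card = r → c (e.image g) = false)}

/-- Auxiliary predicate: the Ramsey property at `p` points. -/
def RProp {V : Type*} [DecidableEq V] (r : ℕ) (S : Finset V)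
    (E : Set (Finset V)) (n p : ℕ) : Prop :=
  ∀ c : Finset (Fin p) → Bool,
    (∃ f : V → Fin p, Set.InjOn f ↑S ∧ ∀ e ∈ E, c (e.image f) = true) ∨
    (∃ g : Fin n → Fin p, Function.Injective g ∧
      ∀ e : Finset (Fin n), e.card = r → c (e.image g) = false)

lemma hRamseyOn_eq {V : Type*} [DecidableEq V] (r : ℕ) (S : Finset V)
    (E : Set (Finset V)) (n : ℕ) :
    hRamseyOn r S E n = sInf {p | RProp r S E n p} := rfl

lemma RProp_mono_clique {V : Type*} [DecidableEq V] {r : ℕ} {S : Finset V}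
    {E : Set (Finset V)} {n p : ℕ} (h : RProp r S E (n + 1) p) : RProp r S E n p := by
  intro c
  rcases h c with hred | ⟨g, hg, hge⟩
  · exact Or.inl hred
  · refine Or.inr ⟨fun i => g i.castSucc, hg.comp (Fin.castSucc_injective n), ?_⟩
    intro e he
    have h1 : (e.image (Fin.castSucc)).card = r := by
      rw [Finset.card_image_of_injective _ (Fin.castSucc_injective n), he]
    have := hge _ h1
    rwa [Finset.image_image] at this

lemma RProp_sub {V : Type*} [DecidableEq V] {r : ℕ} {S S' : Finset V}
    {E E' : Set (Finset V)} {n p : ℕ} (hS : S ⊆ S') (hE : E ⊆ E')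
    (h : RProp r S' E' n p) : RProp r S E n p := by
  intro c
  rcases h c with ⟨f, hf, hfe⟩ | hblue
  · exact Or.inl ⟨f, hf.mono (by exact_mod_cast hS), fun e he => hfe e (hE he)⟩
  · exact Or.inr hblue

theorem stmt_11 (r m n : ℕ) {V : Type*} [DecidableEq V]
    -- `H'` is a connected `r`-uniform hypergraph with vertex set `S'` of order `m - r + 1 ≥ r`:
    (S' : Finset V) (E' : Set (Finset V))
    (hu : ∀ e ∈ E', e.card = r) (hsub : ∀ e ∈ E', e ⊆ S')
    (hconn : ∀ x ∈ S', ∀ y ∈ S', hReach E' x y)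
    (hcard : S'.card = m - r + 1) (hord : r ≤ m - r + 1)
    -- `H` is obtained from `H'` by adding a free hyperedge `e₀` at the vertex `x`:
    (e₀ : Finset V) (he₀ : e₀.card = r) (x : V) (hx : e₀ ∩ S' = {x}) :
    hRamseyOn r (S' ∪ e₀) (insert e₀ E') n ≤
      max (hRamseyOn r S' E' n + n - 1)
        (hRamseyOn r (S' ∪ e₀) (insert e₀ E') (n - 1)) := by
  classical
  have hxx : x ∈ e₀ ∩ S' := hx ▸ Finset.mem_singleton_self x
  have hxe : x ∈ e₀ := (Finset.mem_inter.mp hxx).1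
  have hxS : x ∈ S' := (Finset.mem_inter.mp hxx).2
  have hr : 1 ≤ r := he₀ ▸ Finset.card_pos.mpr ⟨x, hxe⟩
  cases n with
  | zero =>
    have h0 : RProp r (S' ∪ e₀) (insert e₀ E') 0 0 := by
      intro c
      refine Or.inr ⟨Fin.elim0, fun a => a.elim0, fun e he => absurd he ?_⟩
      rw [Finset.eq_empty_of_isEmpty e, Finset.card_empty]
      omega
    calc hRamseyOn r (S' ∪ e₀) (insert e₀ E') 0 ≤ 0 := by
          rw [hRamseyOn_eq]; exact Nat.sInf_le h0
      _ ≤ _ := Nat.zero_le _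
  | succ n' =>
    by_cases hne : {p | RProp r (S' ∪ e₀) (insert e₀ E') (n' + 1) p}.Nonempty
    · have incl1 : {p | RProp r (S' ∪ e₀) (insert e₀ E') (n' + 1) p} ⊆
          {p | RProp r (S' ∪ e₀) (insert e₀ E') n' p} := fun p hp => RProp_mono_clique hp
      have incl2 : {p | RProp r (S' ∪ e₀) (insert e₀ E') (n' + 1) p} ⊆
          {p | RProp r S' E' (n' + 1) p} := fun p hp =>
        RProp_sub Finset.subset_union_left (Set.subset_insert _ _) hp
      set R₁ := sInf {p | RProp r S' E' (n' + 1) p} with hR₁def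
      set R₂ := sInf {p | RProp r (S' ∪ e₀) (insert e₀ E') n' p} with hR₂def
      have hR₁ : RProp r S' E' (n' + 1) R₁ := Nat.sInf_mem (hne.mono incl2)
      have hR₂ : RProp r (S' ∪ e₀) (insert e₀ E') n' R₂ := Nat.sInf_mem (hne.mono incl1)
      set M := max (R₁ + n') R₂ with hMdef
      have key : RProp r (S' ∪ e₀) (insert e₀ E') (n' + 1) M := by
        intro c
        set ι : Fin R₂ → Fin M := Fin.castLE (le_max_right (R₁ + n') R₂) with hιdef
        have hι : Function.Injective ι := Fin.castLE_injective _
        rcases hR₂ (fun e => c (e.image ι)) with ⟨f, hf, hfe⟩ | ⟨g, hg, hge⟩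
        · -- red copy of H already at R₂ points
          refine Or.inl ⟨fun u => ι (f u), ?_, ?_⟩
          · exact hι.injOn.comp hf (Set.mapsTo_univ _ _)
          · intro e he
            have := hfe e he
            rwa [Finset.image_image] at this
        · -- blue K_{n'} with vertex set B
          set B : Finset (Fin M) := Finset.univ.image (fun i => ι (g i)) with hB
          have hιg : Function.Injective (fun i => ι (g i)) := hι.comp hg
          have hBcard : B.card = n' := by
            rw [hB, Finset.card_image_of_injective _ hιg, Finset.card_univ, Fintype.card_fin]
          set T := (Finset.univ : Finset (Fin M)) \ B with hT
          have hTcard : R₁ ≤ T.card := by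
            rw [hT, Finset.card_sdiff_of_subset (Finset.subset_univ B), Finset.card_univ,
              Fintype.card_fin, hBcard]
            have := le_max_left (R₁ + n') R₂
            omega
          set j : Fin R₁ → Fin M :=
            fun i => ((T.orderIsoOfFin rfl) (Fin.castLE hTcard i) : Fin M) with hj
          have hjT : ∀ i, j i ∈ T := fun i => ((T.orderIsoOfFin rfl) (Fin.castLE hTcard i)).2
          have hjinj : Function.Injective j := by
            intro a b hab
            exact Fin.castLE_injective _
              ((T.orderIsoOfFin rfl).injective (Subtype.coe_injective hab))
          rcases hR₁ (fun e => c (e.image j)) with ⟨f, hf, hfe⟩ | ⟨g', hg', hge'⟩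
          · -- red copy of H' inside T
            set v := j (f x) with hv
            have hvT : v ∈ T := hjT (f x)
            have hvB : v ∉ B := (Finset.mem_sdiff.mp (hT ▸ hvT)).2
            by_cases hvW : ∀ W : Finset (Fin n'), W.card = r - 1 →
                c (insert v (W.image (fun i => ι (g i)))) = false
            · -- blue K_{n'+1} on B ∪ {v}
              refine Or.inr ?_
              set G : Fin (n' + 1) → Fin M := Fin.snoc (fun i => ι (g i)) v with hG
              have hGc : ∀ i : Fin n', G i.castSucc = ι (g i) := fun i =>
                Fin.snoc_castSucc _ _ _
              have hGl : G (Fin.last n') = v := Fin.snoc_last _ _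
              refine ⟨G, ?_, ?_⟩
              · intro a b hab
                induction a using Fin.lastCases with
                | last =>
                  induction b using Fin.lastCases with
                  | last => rfl
                  | cast i =>
                    exfalso
                    rw [hGl, hGc] at hab
                    exact hvB (hab ▸ Finset.mem_image_of_mem _ (Finset.mem_univ i))
                | cast i =>
                  induction b using Fin.lastCases with
                  | last =>
                    exfalso
                    rw [hGl, hGc] at hab
                    exact hvB (hab ▸ Finset.mem_image_of_mem _ (Finset.mem_univ i))
                  | cast i' =>
                    rw [hGc, hGc] at hab
                    exact congrArg Fin.castSucc (hιg hab)
              · intro e he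
                set W := Finset.univ.filter (fun i : Fin n' => i.castSucc ∈ e) with hWdef
                have hWim : W.image Fin.castSucc = e.erase (Fin.last n') := by
                  ext a
                  simp only [hWdef, Finset.mem_image, Finset.mem_filter, Finset.mem_univ,
                    true_and, Finset.mem_erase]
                  constructor
                  · rintro ⟨i, hi, rfl⟩
                    exact ⟨(Fin.castSucc_lt_last i).ne, hi⟩
                  · rintro ⟨hne', ha⟩
                    obtain ⟨i, rfl⟩ := Fin.exists_castSucc_eq.mpr hne'
                    exact ⟨i, ha, rfl⟩
                by_cases hl : Fin.last n' ∈ e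
                · have hWcard : W.card = r - 1 := by
                    have h1 : (W.image Fin.castSucc).card = W.card :=
                      Finset.card_image_of_injective _ (Fin.castSucc_injective _)
                    rw [hWim, Finset.card_erase_of_mem hl, he] at h1
                    omega
                  have him : e.image G = insert v (W.image (fun i => ι (g i))) := by
                    conv_lhs => rw [← Finset.insert_erase hl]
                    rw [Finset.image_insert, hGl, ← hWim, Finset.image_image]
                    congr 1
                    apply Finset.image_congr
                    intro i _
                    exact hGc i
                  rw [him]
                  exact hvW W hWcard
                · have hWim' : W.image Fin.castSucc = e := by
                    rw [hWim, Finset.erase_eq_of_notMem hl]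
                  have hWcard : W.card = r := by
                    rw [← he, ← hWim',
                      Finset.card_image_of_injective _ (Fin.castSucc_injective _)]
                  have him : e.image G = W.image (fun i => ι (g i)) := by
                    rw [← hWim', Finset.image_image]
                    apply Finset.image_congr
                    intro i _
                    exact hGc i
                  rw [him]
                  have := hge W hWcard
                  rwa [Finset.image_image] at this
            · -- red copy of H, extending H' by a red free edge into B
              push_neg at hvW
              obtain ⟨W, hWcard, hWne⟩ := hvW
              have hWred : c (insert v (W.image (fun i => ι (g i)))) = true := by
                simpa using hWne
              refine Or.inl ?_
              set W' := W.image (fun i => ι (g i)) with hW'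
              have hW'card : W'.card = r - 1 := by
                rw [hW', Finset.card_image_of_injective _ hιg, hWcard]
              set D := e₀.erase x with hD
              have hDcard : D.card = r - 1 := by
                rw [hD, Finset.card_erase_of_mem hxe, he₀]
              have hcard2 : D.card = W'.card := by rw [hDcard, hW'card]
              set φ := Finset.equivOfCardEq hcard2 with hφ
              set F : V → Fin M := fun u =>
                if h : u ∈ D then (φ ⟨u, h⟩ : Fin M) else j (f u) with hF
              have hFD : ∀ u (h : u ∈ D), F u = ↑(φ ⟨u, h⟩) := by
                intro u h
                simp only [hF, dif_pos h]
              have hFn : ∀ u, u ∉ D → F u = j (f u) := by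
                intro u h
                simp only [hF, dif_neg h]
              have hW'B : ∀ z ∈ W', z ∈ B := by
                intro z hz
                rw [hW'] at hz
                obtain ⟨i, _, rfl⟩ := Finset.mem_image.mp hz
                exact Finset.mem_image_of_mem _ (Finset.mem_univ i)
              have hTnB : ∀ z ∈ T, z ∉ B := fun z hz => (Finset.mem_sdiff.mp (hT ▸ hz)).2
              have hSD : ∀ u ∈ S', u ∉ D := by
                intro u hu hud
                rw [hD] at hud
                have h1 : u ∈ e₀ := Finset.mem_of_mem_erase hud
                have h2 : u ≠ x := Finset.ne_of_mem_erase hud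
                have h3 : u ∈ e₀ ∩ S' := Finset.mem_inter.mpr ⟨h1, hu⟩
                rw [hx] at h3
                exact h2 (Finset.mem_singleton.mp h3)
              have hφinjD : Set.InjOn F ↑D := by
                intro a ha b hb hab
                rw [Finset.mem_coe] at ha hb
                rw [hFD a ha, hFD b hb] at hab
                exact Subtype.ext_iff.mp (φ.injective (Subtype.coe_injective hab))
              have hDim : D.image F = W' := by
                apply Finset.eq_of_subset_of_card_le
                · intro z hz
                  obtain ⟨u, hu, rfl⟩ := Finset.mem_image.mp hz
                  rw [hFD u hu]
                  exact (φ ⟨u, hu⟩).2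
                · rw [Finset.card_image_of_injOn hφinjD, hcard2]
              refine ⟨F, ?_, ?_⟩
              · -- injectivity on S' ∪ e₀
                intro a ha b hb hab
                rw [Finset.coe_union, Set.mem_union] at ha hb
                have hclass : ∀ u, u ∈ (S' : Set V) ∨ u ∈ (e₀ : Set V) →
                    u ∈ D ∨ (u ∈ S' ∧ u ∉ D) := by
                  intro u hu
                  by_cases h : u ∈ D
                  · exact Or.inl h
                  · refine Or.inr ⟨?_, h⟩
                    rcases hu with h1 | h1
                    · exact Finset.mem_coe.mp h1
                    · have h2 : u = x := by
                        by_contra hne'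
                        exact h (hD ▸ Finset.mem_erase.mpr ⟨hne', Finset.mem_coe.mp h1⟩)
                      exact h2 ▸ hxS
                rcases hclass a ha with haD | ⟨haS, haD⟩ <;>
                  rcases hclass b hb with hbD | ⟨hbS, hbD⟩
                · exact hφinjD (Finset.mem_coe.mpr haD) (Finset.mem_coe.mpr hbD) hab
                · exfalso
                  rw [hFD a haD, hFn b hbD] at hab
                  have h1 : (↑(φ ⟨a, haD⟩) : Fin M) ∈ W' := (φ ⟨a, haD⟩).2
                  exact hTnB _ (hjT (f b)) (hab ▸ hW'B _ h1)
                · exfalso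
                  rw [hFn a haD, hFD b hbD] at hab
                  have h1 : (↑(φ ⟨b, hbD⟩) : Fin M) ∈ W' := (φ ⟨b, hbD⟩).2
                  exact hTnB _ (hjT (f a)) (hab ▸ hW'B _ h1)
                · rw [hFn a haD, hFn b hbD] at hab
                  exact hf (Finset.mem_coe.mpr haS) (Finset.mem_coe.mpr hbS) (hjinj hab)
              · -- all edges of H are red
                intro e he
                rw [Set.mem_insert_iff] at he
                rcases he with he' | he
                · rw [he']
                  have hxD : x ∉ D := hD ▸ Finset.notMem_erase x e₀
                  have h1 : e₀.image F = insert v W' := by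
                    have he₀' : e₀ = insert x D := by
                      rw [hD, Finset.insert_erase hxe]
                    rw [he₀', Finset.image_insert, hFn x hxD, hDim, hv]
                  rw [h1]
                  exact hWred
                · have h2 : e.image F = (e.image f).image j := by
                    rw [Finset.image_image]
                    apply Finset.image_congr
                    intro u hu
                    exact hFn u (hSD u (hsub e he hu))
                  rw [h2]
                  exact hfe e he
          · -- blue K_{n'+1} inside T
            refine Or.inr ⟨fun i => j (g' i), hjinj.comp hg', ?_⟩
            intro e he
            have := hge' e he
            rwa [Finset.image_image] at this
      have hle : hRamseyOn r (S' ∪ e₀) (insert e₀ E') (n' + 1) ≤ M := by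
        rw [hRamseyOn_eq]
        exact Nat.sInf_le key
      have e1 : hRamseyOn r S' E' (n' + 1) + (n' + 1) - 1 = R₁ + n' := by
        rw [hRamseyOn_eq]
        omega
      have e2 : hRamseyOn r (S' ∪ e₀) (insert e₀ E') (n' + 1 - 1) = R₂ := by
        rw [hRamseyOn_eq]
        norm_num
        rfl
      rw [e1, e2]
      exact hle
    · rw [Set.not_nonempty_iff_eq_empty] at hne
      have : hRamseyOn r (S' ∪ e₀) (insert e₀ E') (n' + 1) = 0 := by
        rw [hRamseyOn_eq, hne, Nat.sInf_empty]
      rw [this]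
      exact Nat.zero_le _
end

section
/- Let r ≥ 3 be odd and n ≥ r + 1. Then R(T_{2r−1}^{(r)}, K_n^{(r)}; r) ≤ (r+1)n/2 − (r−1) if n is even, and ≤ (r+1)n/2 − (r−1)/2 if n is odd. -/
/-- `hRamsey E r n` is the Ramsey number `R(H, K_n^{(r)}; r)` where `H` is the
hypergraph with vertex type `V` and hyperedge set `E`. -/
noncomputable def hRamsey {V : Type*} [DecidableEq V] (E : Set (Finset V)) (r n : ℕ) : ℕ :=
  sInf {p | ∀ c : Finset (Fin p) → Bool,
    (∃ f : V → Fin p, Function.Injective f ∧ ∀ e ∈ E, c (e.image f) = true) ∨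
    (∃ g : Fin n → Fin p, Function.Injective g ∧
      ∀ e : Finset (Fin n), e.card = r → c (e.image g) = false)}

open Finset

/-- Embedding two `r`-sets meeting in one vertex onto two such `r`-sets. -/
lemma embed_T {V : Type*} [Fintype V] [DecidableEq V] {p r : ℕ}
    (e₁ e₂ : Finset V) (h1 : e₁.card = r) (h2 : e₂.card = r)
    (hint : (e₁ ∩ e₂).card = 1) (hcover : e₁ ∪ e₂ = Finset.univ)
    (A B : Finset (Fin p)) (hA : A.card = r) (hB : B.card = r)
    (hAB : (A ∩ B).card = 1) :
    ∃ f : V → Fin p, Function.Injective f ∧ e₁.image f = A ∧ e₂.image f = B := by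
  classical
  obtain ⟨a, ha⟩ := Finset.card_eq_one.mp hint
  obtain ⟨x, hx⟩ := Finset.card_eq_one.mp hAB
  have hc1 : (e₁ \ e₂).card = (A \ B).card := by
    have := Finset.card_sdiff_add_card_inter e₁ e₂
    have := Finset.card_sdiff_add_card_inter A B
    omega
  have hc2 : (e₂ \ e₁).card = (B \ A).card := by
    have := Finset.card_sdiff_add_card_inter e₂ e₁
    have h3 : (e₂ ∩ e₁).card = 1 := by rwa [Finset.inter_comm]
    have := Finset.card_sdiff_add_card_inter B A
    have h4 : (B ∩ A).card = 1 := by rwa [Finset.inter_comm]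
    omega
  let φ := Finset.equivOfCardEq hc1
  let ψ := Finset.equivOfCardEq hc2
  have haa : a ∈ e₁ ∩ e₂ := by rw [ha]; exact Finset.mem_singleton_self a
  have hxx : x ∈ A ∩ B := by rw [hx]; exact Finset.mem_singleton_self x
  set f : V → Fin p := fun v =>
    if h : v ∈ e₁ \ e₂ then (φ ⟨v, h⟩ : Fin p)
    else if h : v ∈ e₂ \ e₁ then (ψ ⟨v, h⟩ : Fin p)
    else x with hf
  have hval : ∀ v : V,
      (v ∈ e₁ \ e₂ ∧ f v ∈ A \ B) ∨ (v ∈ e₂ \ e₁ ∧ f v ∈ B \ A) ∨ (v = a ∧ f v = x) := by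
    intro v
    by_cases h : v ∈ e₁ \ e₂
    · left; exact ⟨h, by simp only [hf, dif_pos h]; exact (φ ⟨v, h⟩).2⟩
    · by_cases h' : v ∈ e₂ \ e₁
      · right; left
        exact ⟨h', by simp only [hf, dif_neg h, dif_pos h']; exact (ψ ⟨v, h'⟩).2⟩
      · right; right
        have hv : v ∈ e₁ ∪ e₂ := by rw [hcover]; exact Finset.mem_univ v
        rw [Finset.mem_union] at hv
        simp only [Finset.mem_sdiff, not_and, not_not] at h h'
        have : v ∈ e₁ ∩ e₂ := by
          rcases hv with hv | hv
          · exact Finset.mem_inter.mpr ⟨hv, h hv⟩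
          · exact Finset.mem_inter.mpr ⟨h' hv, hv⟩
        rw [ha, Finset.mem_singleton] at this
        have hne1 : v ∉ e₁ \ e₂ := fun hh =>
          absurd (h (Finset.mem_sdiff.mp hh).1) (Finset.mem_sdiff.mp hh).2
        have hne2 : v ∉ e₂ \ e₁ := fun hh =>
          absurd (h' (Finset.mem_sdiff.mp hh).1) (Finset.mem_sdiff.mp hh).2
        refine ⟨this, ?_⟩
        simp only [hf, dif_neg hne1, dif_neg hne2]
  have hxAB : x ∉ A \ B ∧ x ∉ B \ A := by
    rw [Finset.mem_inter] at hxx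
    constructor <;> simp [Finset.mem_sdiff, hxx.1, hxx.2]
  have hinj : Function.Injective f := by
    intro u v huv
    rcases hval u with ⟨hu, hfu⟩ | ⟨hu, hfu⟩ | ⟨hu, hfu⟩ <;>
      rcases hval v with ⟨hv, hfv⟩ | ⟨hv, hfv⟩ | ⟨hv, hfv⟩
    · -- both via φ
      have : φ ⟨u, hu⟩ = φ ⟨v, hv⟩ := by
        apply Subtype.ext
        have h1f : f u = (φ ⟨u, hu⟩ : Fin p) := by simp only [hf, dif_pos hu]
        have h2f : f v = (φ ⟨v, hv⟩ : Fin p) := by simp only [hf, dif_pos hv]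
        rw [← h1f, ← h2f, huv]
      exact congrArg Subtype.val (φ.injective this)
    · exfalso; rw [huv] at hfu
      exact (Finset.mem_sdiff.mp hfv).2 (Finset.mem_sdiff.mp hfu).1
    · exfalso; rw [huv, hfv] at hfu; exact hxAB.1 hfu
    · exfalso; rw [huv] at hfu
      exact (Finset.mem_sdiff.mp hfu).2 (Finset.mem_sdiff.mp hfv).1
    · have : ψ ⟨u, hu⟩ = ψ ⟨v, hv⟩ := by
        apply Subtype.ext
        have h1f : f u = (ψ ⟨u, hu⟩ : Fin p) := by
          simp only [hf]
          rw [dif_neg (fun hh => (Finset.mem_sdiff.mp hu).2 (Finset.mem_sdiff.mp hh).1),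
            dif_pos hu]
        have h2f : f v = (ψ ⟨v, hv⟩ : Fin p) := by
          simp only [hf]
          rw [dif_neg (fun hh => (Finset.mem_sdiff.mp hv).2 (Finset.mem_sdiff.mp hh).1),
            dif_pos hv]
        rw [← h1f, ← h2f, huv]
      exact congrArg Subtype.val (ψ.injective this)
    · exfalso; rw [huv, hfv] at hfu; exact hxAB.2 hfu
    · exfalso; rw [← huv, hfu] at hfv; exact hxAB.1 hfv
    · exfalso; rw [← huv, hfu] at hfv; exact hxAB.2 hfv
    · rw [hu, hv]
  have himg : ∀ (e : Finset V) (C : Finset (Fin p)), e.card = r → C.card = r →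
      a ∈ e → x ∈ C → (∀ v ∈ e, f v ∈ C) → e.image f = C := by
    intro e C he hC hae hxC hsub
    apply Finset.eq_of_subset_of_card_le
    · intro y hy
      rw [Finset.mem_image] at hy
      obtain ⟨v, hv, rfl⟩ := hy
      exact hsub v hv
    · rw [Finset.card_image_of_injective _ hinj, he, hC]
  have ha1 : a ∈ e₁ := (Finset.mem_inter.mp haa).1
  have ha2 : a ∈ e₂ := (Finset.mem_inter.mp haa).2
  have hx1 : x ∈ A := (Finset.mem_inter.mp hxx).1
  have hx2 : x ∈ B := (Finset.mem_inter.mp hxx).2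
  refine ⟨f, hinj, ?_, ?_⟩
  · apply himg e₁ A h1 hA ha1 hx1
    intro v hv
    rcases hval v with ⟨hu, hfu⟩ | ⟨hu, hfu⟩ | ⟨hu, hfu⟩
    · exact (Finset.mem_sdiff.mp hfu).1
    · exact absurd hv (Finset.mem_sdiff.mp hu).2
    · rw [hfu]; exact hx1
  · apply himg e₂ B h2 hB ha2 hx2
    intro v hv
    rcases hval v with ⟨hu, hfu⟩ | ⟨hu, hfu⟩ | ⟨hu, hfu⟩
    · exact absurd hv (Finset.mem_sdiff.mp hu).2
    · exact (Finset.mem_sdiff.mp hfu).1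
    · rw [hfu]; exact hx2

/-- Maximal red matching argument: no red copy of the tree forces a large blue set. -/
lemma blue_clique {p r n : ℕ} (hr : 3 ≤ r) (hodd : Odd r)
    (c : Finset (Fin p) → Bool)
    (hnored : ∀ A B : Finset (Fin p), A.card = r → B.card = r →
      (A ∩ B).card = 1 → c A = true → c B = true → False)
    (hsize : n + (r - 1) * ((n - 1) / 2) ≤ p) :
    ∃ S : Finset (Fin p), n ≤ S.card ∧ ∀ e ⊆ S, e.card = r → c e = false := by
  classical
  set Good : Finset (Finset (Fin p)) → Prop := fun 𝓜 =>
    (∀ M ∈ 𝓜, M.card = r ∧ c M = true) ∧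
    (∀ M ∈ 𝓜, ∀ N ∈ 𝓜, M ≠ N → Disjoint M N) with hGoodDef
  have h0 : Good ∅ := ⟨by simp, by simp⟩
  obtain ⟨𝓜, h𝓜mem, h𝓜max⟩ := Finset.exists_max_image
    (Finset.univ.filter Good) Finset.card
    ⟨∅, Finset.mem_filter.mpr ⟨Finset.mem_univ _, h0⟩⟩
  have hG : Good 𝓜 := (Finset.mem_filter.mp h𝓜mem).2
  have hmax : ∀ 𝓝, Good 𝓝 → 𝓝.card ≤ 𝓜.card := fun 𝓝 h =>
    h𝓜max 𝓝 (Finset.mem_filter.mpr ⟨Finset.mem_univ _, h⟩)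
  have hcardM : ∀ M ∈ 𝓜, M.card = r := fun M hM => (hG.1 M hM).1
  have hredM : ∀ M ∈ 𝓜, c M = true := fun M hM => (hG.1 M hM).2
  have hdisj : ∀ M ∈ 𝓜, ∀ N ∈ 𝓜, M ≠ N → Disjoint M N := hG.2
  -- every red r-set meets some matching edge
  have hmeet : ∀ e : Finset (Fin p), e.card = r → c e = true →
      ∃ M ∈ 𝓜, ¬ Disjoint e M := by
    intro e he hce
    by_contra h
    push_neg at h
    have hnotmem : e ∉ 𝓜 := by
      intro hmem
      have hd := h e hmem
      have he0 : e = ∅ := disjoint_self.mp hd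
      rw [he0, Finset.card_empty] at he
      omega
    have hGood' : Good (insert e 𝓜) := by
      constructor
      · intro M hM
        rcases Finset.mem_insert.mp hM with rfl | hM
        · exact ⟨he, hce⟩
        · exact hG.1 M hM
      · intro M hM N hN hMN
        rcases Finset.mem_insert.mp hM with hMe | hM'
        · rcases Finset.mem_insert.mp hN with hNe | hN'
          · exact absurd (hMe.trans hNe.symm) hMN
          · rw [hMe]; exact h N hN'
        · rcases Finset.mem_insert.mp hN with hNe | hN'
          · rw [hNe]; exact (h M hM').symm
          · exact hdisj M hM' N hN' hMN
    have := hmax _ hGood'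
    rw [Finset.card_insert_of_notMem hnotmem] at this
    omega
  -- no red edge meets a matching edge in exactly one vertex
  have hone : ∀ e : Finset (Fin p), e.card = r → c e = true →
      ∀ M ∈ 𝓜, (e ∩ M).card ≠ 1 := by
    intro e he hce M hM h1
    exact hnored e M he (hcardM M hM) h1 hce (hredM M hM)
  by_cases hcase : n ≤ 2 * 𝓜.card
  · -- take pairs from each matching edge
    have hpr : ∀ M : Finset (Fin p), ∃ t ⊆ M, t.card = min 2 M.card :=
      fun M => Finset.exists_subset_card_eq (min_le_right _ _)
    choose pr hprsub hprcard using hpr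
    have hpr2 : ∀ M ∈ 𝓜, (pr M).card = 2 := by
      intro M hM
      rw [hprcard M, hcardM M hM]
      omega
    set S := 𝓜.biUnion pr with hS
    have hprdisj : ∀ M ∈ 𝓜, ∀ N ∈ 𝓜, M ≠ N → Disjoint (pr M) (pr N) :=
      fun M hM N hN hMN => Finset.disjoint_of_subset_left (hprsub M)
        (Finset.disjoint_of_subset_right (hprsub N) (hdisj M hM N hN hMN))
    have hScard : S.card = 2 * 𝓜.card := by
      rw [hS, Finset.card_biUnion hprdisj]
      rw [Finset.sum_congr rfl hpr2, Finset.sum_const, smul_eq_mul]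
      ring
    refine ⟨S, by omega, ?_⟩
    intro e hsub hecard
    by_contra hc
    have hce : c e = true := by
      cases h : c e
      · exact absurd h hc
      · rfl
    -- e decomposes into intersections with the pairs
    have hdecomp : e = 𝓜.biUnion (fun M => e ∩ pr M) := by
      rw [← Finset.inter_biUnion, ← hS]
      exact (Finset.inter_eq_left.mpr hsub).symm
    have hcards : e.card = ∑ M ∈ 𝓜, (e ∩ pr M).card := by
      conv_lhs => rw [hdecomp]
      exact Finset.card_biUnion fun M hM N hN hMN =>
        Finset.disjoint_of_subset_left Finset.inter_subset_right
          (Finset.disjoint_of_subset_right Finset.inter_subset_right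
            (hprdisj M hM N hN hMN))
    -- r odd: some intersection is odd, hence of size 1
    have hexodd : ∃ M ∈ 𝓜, ¬ Even ((e ∩ pr M).card) := by
      by_contra h
      push_neg at h
      have : Even (∑ M ∈ 𝓜, (e ∩ pr M).card) := Finset.even_sum _ h
      rw [← hcards, hecard] at this
      exact (Nat.not_even_iff_odd.mpr hodd) this
    obtain ⟨M, hM, hModd⟩ := hexodd
    have hle2 : (e ∩ pr M).card ≤ 2 := by
      rw [← hpr2 M hM]
      exact Finset.card_le_card Finset.inter_subset_right
    have h1 : (e ∩ pr M).card = 1 := by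
      rcases Nat.even_or_odd ((e ∩ pr M).card) with h | h
      · exact absurd h hModd
      · obtain ⟨k, hk⟩ := h; omega
    -- e ∩ M = e ∩ pr M
    have hEM : e ∩ M = e ∩ pr M := by
      apply Finset.Subset.antisymm
      · intro v hv
        rw [Finset.mem_inter] at hv ⊢
        refine ⟨hv.1, ?_⟩
        have hvS : v ∈ S := hsub hv.1
        rw [hS, Finset.mem_biUnion] at hvS
        obtain ⟨N, hN, hvN⟩ := hvS
        by_cases hMN : M = N
        · rw [hMN]; exact hvN
        · exfalso
          exact Finset.disjoint_left.mp (hdisj M hM N hN hMN) hv.2 (hprsub N hvN)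
      · exact Finset.inter_subset_inter (Finset.Subset.refl e) (hprsub M)
    exact hone e hecard hce M hM (by rw [hEM]; exact h1)
  · -- W = vertices outside the matching plus one vertex per matching edge
    push_neg at hcase
    have hsing : ∀ M : Finset (Fin p), ∃ t ⊆ M, t.card = min 1 M.card :=
      fun M => Finset.exists_subset_card_eq (min_le_right _ _)
    choose sg hsgsub hsgcard using hsing
    have hsg1 : ∀ M ∈ 𝓜, (sg M).card = 1 := by
      intro M hM
      rw [hsgcard M, hcardM M hM]
      omega
    set X := 𝓜.biUnion (fun M => M) with hX
    have hXcard : X.card = r * 𝓜.card := by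
      rw [hX, Finset.card_biUnion (fun M hM N hN h => hdisj M hM N hN h)]
      rw [Finset.sum_congr rfl (fun M hM => hcardM M hM), Finset.sum_const, smul_eq_mul]
      ring
    have hsgdisj : ∀ M ∈ 𝓜, ∀ N ∈ 𝓜, M ≠ N → Disjoint (sg M) (sg N) :=
      fun M hM N hN hMN => Finset.disjoint_of_subset_left (hsgsub M)
        (Finset.disjoint_of_subset_right (hsgsub N) (hdisj M hM N hN hMN))
    set Y := 𝓜.biUnion sg with hY
    have hYcard : Y.card = 𝓜.card := by
      rw [hY, Finset.card_biUnion hsgdisj, Finset.sum_congr rfl hsg1,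
        Finset.sum_const, smul_eq_mul, mul_one]
    have hYX : Y ⊆ X := by
      intro v hv
      rw [hY, Finset.mem_biUnion] at hv
      obtain ⟨M, hM, hvM⟩ := hv
      rw [hX, Finset.mem_biUnion]
      exact ⟨M, hM, hsgsub M hvM⟩
    set W := (Finset.univ \ X) ∪ Y with hW
    have hWcard : W.card = (p - X.card) + 𝓜.card := by
      rw [hW, Finset.card_union_of_disjoint, hYcard, Finset.card_sdiff_of_subset
        (Finset.subset_univ X), Finset.card_univ, Fintype.card_fin]
      exact Finset.disjoint_left.mpr fun v hv hvY =>
        (Finset.mem_sdiff.mp hv).2 (hYX hvY)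
    have hXle : X.card ≤ p := by
      have := Finset.card_le_card (Finset.subset_univ X)
      rwa [Finset.card_univ, Fintype.card_fin] at this
    have hmle : 𝓜.card ≤ (n - 1) / 2 := by omega
    have hmul : (r - 1) * 𝓜.card ≤ (r - 1) * ((n - 1) / 2) :=
      Nat.mul_le_mul_left _ hmle
    have hWn : n ≤ W.card := by
      have hrm : (r - 1) * 𝓜.card + 𝓜.card = r * 𝓜.card := by
        have h1 : r - 1 + 1 = r := by omega
        calc (r - 1) * 𝓜.card + 𝓜.card = (r - 1 + 1) * 𝓜.card := by ring
          _ = r * 𝓜.card := by rw [h1]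
      omega
    refine ⟨W, hWn, ?_⟩
    intro e hsub hecard
    by_contra hc
    have hce : c e = true := by
      cases h : c e
      · exact absurd h hc
      · rfl
    obtain ⟨M, hM, hMd⟩ := hmeet e hecard hce
    rw [Finset.not_disjoint_iff_nonempty_inter] at hMd
    -- e ∩ M ⊆ sg M
    have hEM : e ∩ M ⊆ sg M := by
      intro v hv
      rw [Finset.mem_inter] at hv
      have hvW : v ∈ W := hsub hv.1
      rw [hW, Finset.mem_union] at hvW
      rcases hvW with hvW | hvW
      · exfalso
        apply (Finset.mem_sdiff.mp hvW).2
        rw [hX, Finset.mem_biUnion]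
        exact ⟨M, hM, hv.2⟩
      · rw [hY, Finset.mem_biUnion] at hvW
        obtain ⟨N, hN, hvN⟩ := hvW
        by_cases hMN : M = N
        · rw [hMN]; exact hvN
        · exfalso
          exact Finset.disjoint_left.mp (hdisj M hM N hN hMN) hv.2 (hsgsub N hvN)
    have hle1 : (e ∩ M).card ≤ 1 := by
      rw [← hsg1 M hM]
      exact Finset.card_le_card hEM
    have hge1 : 1 ≤ (e ∩ M).card := Finset.card_pos.mpr hMd
    exact hone e hecard hce M hM (by omega)

theorem stmt_15 (r n : ℕ) (hr : 3 ≤ r) (hodd : Odd r) (hn : r + 1 ≤ n)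
    {V : Type*} [Fintype V] [DecidableEq V]
    -- `T_{2r-1}^{(r)}`: two `r`-element hyperedges meeting in exactly one vertex:
    (e₁ e₂ : Finset V) (h1 : e₁.card = r) (h2 : e₂.card = r)
    (hint : (e₁ ∩ e₂).card = 1) (hcover : e₁ ∪ e₂ = Finset.univ) :
    hRamsey ({e₁, e₂} : Set (Finset V)) r n ≤
      if Even n then (r + 1) * n / 2 - (r - 1) else (r + 1) * n / 2 - (r - 1) / 2 := by
  classical
  set P := if Even n then (r + 1) * n / 2 - (r - 1) else (r + 1) * n / 2 - (r - 1) / 2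
    with hPdef
  apply Nat.sInf_le
  intro c
  by_cases hred : ∃ A B : Finset (Fin P), A.card = r ∧ B.card = r ∧
      (A ∩ B).card = 1 ∧ c A = true ∧ c B = true
  · left
    obtain ⟨A, B, hA, hB, hAB, hcA, hcB⟩ := hred
    obtain ⟨f, hfinj, hfA, hfB⟩ := embed_T e₁ e₂ h1 h2 hint hcover A B hA hB hAB
    refine ⟨f, hfinj, ?_⟩
    intro e he
    rcases he with rfl | he
    · rw [hfA]; exact hcA
    · rw [Set.mem_singleton_iff] at he
      subst he
      rw [hfB]; exact hcB
  · right
    push_neg at hred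
    have hnored : ∀ A B : Finset (Fin P), A.card = r → B.card = r →
        (A ∩ B).card = 1 → c A = true → c B = true → False := by
      intro A B hA hB hAB hcA hcB
      exact absurd hcB (hred A B hA hB hAB hcA)
    have hsize : n + (r - 1) * ((n - 1) / 2) ≤ P := by
      rw [hPdef]
      obtain ⟨k, hk⟩ := hodd
      have e2 : (r + 1) * n / 2 = (k + 1) * n := by
        have h2 : (r + 1) * n = 2 * ((k + 1) * n) := by rw [hk]; ring
        rw [h2, Nat.mul_div_cancel_left _ (by norm_num : 0 < 2)]
      have e4 : r - 1 = 2 * k := by omega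
      split_ifs with h
      · obtain ⟨l, hl⟩ := h
        have hl' : n = 2 * (l - 2 + 2) := by omega
        set t := l - 2 with ht
        have e3 : (n - 1) / 2 = t + 1 := by omega
        rw [e2, e3, e4]
        have key : n + 2 * k * (t + 1) + 2 * k = (k + 1) * n := by
          rw [hl']; ring
        omega
      · have hodd' : n % 2 = 1 := by
          rcases Nat.even_or_odd n with he | ho
          · exact absurd he h
          · exact Nat.odd_iff.mp ho
        have hl' : n = 2 * ((n - 1) / 2) + 1 := by omega
        set l := (n - 1) / 2 with hldef
        have e5 : (r - 1) / 2 = k := by omega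
        rw [e2, e5, e4]
        have key : n + 2 * k * l + k = (k + 1) * n := by
          rw [hl']; ring
        omega
    obtain ⟨S, hScard, hSblue⟩ := blue_clique hr hodd c hnored hsize
    obtain ⟨T, hTsub, hTcard⟩ := Finset.exists_subset_card_eq hScard
    set g : Fin n → Fin P := fun i => (T.orderIsoOfFin hTcard i : Fin P) with hg
    have hginj : Function.Injective g := by
      intro i j hij
      exact (T.orderIsoOfFin hTcard).injective (Subtype.ext hij)
    refine ⟨g, hginj, ?_⟩
    intro e he
    apply hSblue
    · intro v hv
      rw [Finset.mem_image] at hv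
      obtain ⟨i, _, rfl⟩ := hv
      exact hTsub (T.orderIsoOfFin hTcard i).2
    · rw [Finset.card_image_of_injective _ hginj, he]
end
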